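/- Let a < b be real numbers, α > 0, and let A be the Volterra integration operator on C([a,b]), (A x)(t) = ∫_a^t x(s) ds. Then the inverse of A + αI satisfies the operator norm bound ‖(A + αI)^{-1}‖ ≤ (1/α)·(2 − e^{−(b−a)/α}), and (1/α)·(2 − e^{−(b−a)/α}) < 2/α; equivalently, for every f ∈ C([a,b]), sup_{t∈[a,b]} |((A + αI)^{-1} f)(t)| ≤ (1/α)·(2 − e^{−(b−a)/α})·sup_{t∈[a,b]} |f(t)|. -/

import Mathlib

open Set Filter Topology intervalIntegral

lemma volterra_aux (a b : ℝ) (hab : a < b) (α : ℝ) (hα : 0 < α)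
    (f : C(Icc a b, ℝ)) (t : Icc a b) :
    |f t / α - (1 / α ^ 2) *
      ∫ s in a..(t : ℝ), Real.exp (-(((t : ℝ) - s) / α)) * IccExtend hab.le ⇑f s|
    ≤ (1 / α) * (2 - Real.exp (-((b - a) / α))) * ‖f‖ := by
  obtain ⟨ht1, ht2⟩ := t.2
  set tt : ℝ := (t : ℝ)
  -- continuity of the integrand
  have hFcont : Continuous (IccExtend hab.le ⇑f) := f.continuous.Icc_extend'
  have hEcont : Continuous fun s : ℝ => Real.exp (-((tt - s) / α)) := by
    fun_prop
  -- value of ∫ exp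
  have hderiv : ∀ s : ℝ, HasDerivAt (fun s => α * Real.exp (-((tt - s) / α)))
      (Real.exp (-((tt - s) / α))) s := by
    intro s
    have h1 : HasDerivAt (fun s : ℝ => -((tt - s) / α)) (1/α) s := by
      have := ((hasDerivAt_id s).const_sub tt).div_const α
      exact this.neg.congr_deriv (by ring)
    have := (h1.exp).const_mul α
    exact this.congr_deriv (by field_simp)
  have hIval : (∫ s in a..tt, Real.exp (-((tt - s) / α)))
      = α * (1 - Real.exp (-((tt - a) / α))) := by
    rw [intervalIntegral.integral_eq_sub_of_hasDerivAt (fun s _ => hderiv s)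
      (hEcont.intervalIntegrable a tt)]
    simp [sub_self]
    ring
  -- bound on |∫ e * F|
  have hbnd : |∫ s in a..tt, Real.exp (-((tt - s) / α)) * IccExtend hab.le ⇑f s|
      ≤ (∫ s in a..tt, Real.exp (-((tt - s) / α))) * ‖f‖ := by
    have h1 : |∫ s in a..tt, Real.exp (-((tt - s) / α)) * IccExtend hab.le ⇑f s|
        ≤ ∫ s in a..tt, |Real.exp (-((tt - s) / α)) * IccExtend hab.le ⇑f s| :=
      intervalIntegral.abs_integral_le_integral_abs ht1
    have h2 : (∫ s in a..tt, |Real.exp (-((tt - s) / α)) * IccExtend hab.le ⇑f s|)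
        ≤ ∫ s in a..tt, Real.exp (-((tt - s) / α)) * ‖f‖ := by
      apply intervalIntegral.integral_mono_on ht1
      · exact ((hEcont.mul hFcont).abs).intervalIntegrable a tt
      · exact (hEcont.mul continuous_const).intervalIntegrable a tt
      · intro s _
        rw [abs_mul, abs_of_pos (Real.exp_pos _)]
        apply mul_le_mul_of_nonneg_left _ (Real.exp_pos _).le
        exact (f.norm_coe_le_norm _).trans_eq' rfl
    rw [intervalIntegral.integral_mul_const] at h2
    exact h1.trans h2
  rw [hIval] at hbnd
  have hft : |f t| ≤ ‖f‖ := f.norm_coe_le_norm t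
  have hexp1 : Real.exp (-((tt - a) / α)) ≤ 1 := by
    apply Real.exp_le_one_iff.mpr
    have : 0 ≤ (tt - a) / α := div_nonneg (by linarith) hα.le
    linarith
  have hexp2 : Real.exp (-((b - a) / α)) ≤ Real.exp (-((tt - a) / α)) := by
    apply Real.exp_le_exp.mpr
    have : (tt - a) / α ≤ (b - a) / α := by
      gcongr
    linarith
  have hfn : 0 ≤ ‖f‖ := norm_nonneg f
  have key := abs_sub (f t / α) ((1 / α ^ 2) *
      ∫ s in a..tt, Real.exp (-((tt - s) / α)) * IccExtend hab.le ⇑f s)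
  calc |f t / α - (1 / α ^ 2) * ∫ s in a..tt, Real.exp (-((tt - s) / α)) * IccExtend hab.le ⇑f s|
      ≤ |f t / α| + |(1 / α ^ 2) * ∫ s in a..tt, Real.exp (-((tt - s) / α)) * IccExtend hab.le ⇑f s| :=
        abs_sub _ _
    _ ≤ ‖f‖ / α + (1 / α ^ 2) * (α * (1 - Real.exp (-((tt - a) / α))) * ‖f‖) := by
        rw [abs_div, abs_mul, abs_of_pos hα, abs_of_pos (show (0:ℝ) < 1 / α ^ 2 by positivity)]
        gcongr
    _ = ‖f‖ / α + (1 / α) * ((1 - Real.exp (-((tt - a) / α))) * ‖f‖) := by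
        field_simp
    _ ≤ (1 / α) * (2 - Real.exp (-((b - a) / α))) * ‖f‖ := by
        have hp : (0:ℝ) < 1 / α := by positivity
        rw [show ‖f‖ / α + (1/α) * ((1 - Real.exp (-((tt - a) / α))) * ‖f‖)
            = (1/α) * (2 - Real.exp (-((tt - a)/α))) * ‖f‖ from by ring]
        apply mul_le_mul_of_nonneg_right _ hfn
        apply mul_le_mul_of_nonneg_left _ hp.le
        linarith

theorem volterra_inverse_norm_bound
    (a b : ℝ) (hab : a < b) (α : ℝ) (hα : 0 < α) :
    (∀ T : C(Icc a b, ℝ) →L[ℝ] C(Icc a b, ℝ),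
      (∀ (f : C(Icc a b, ℝ)) (t : Icc a b),
        T f t = f t / α - (1 / α ^ 2) *
          ∫ s in a..(t : ℝ), Real.exp (-(((t : ℝ) - s) / α)) * IccExtend hab.le ⇑f s) →
      ‖T‖ ≤ (1 / α) * (2 - Real.exp (-((b - a) / α))) ∧
      ∀ (f : C(Icc a b, ℝ)) (t : Icc a b),
        |T f t| ≤ (1 / α) * (2 - Real.exp (-((b - a) / α))) * ‖f‖) ∧
    (1 / α) * (2 - Real.exp (-((b - a) / α))) < 2 / α := by
  have hC : (0:ℝ) ≤ (1 / α) * (2 - Real.exp (-((b - a) / α))) := by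
    have := Real.exp_le_one_iff.mpr (show -((b - a) / α) ≤ 0 by
      have : 0 ≤ (b - a) / α := div_nonneg (by linarith) hα.le
      linarith)
    apply mul_nonneg (by positivity)
    linarith
  constructor
  · intro T hT
    have hpt : ∀ (f : C(Icc a b, ℝ)) (t : Icc a b),
        |T f t| ≤ (1 / α) * (2 - Real.exp (-((b - a) / α))) * ‖f‖ := by
      intro f t
      rw [hT f t]
      exact volterra_aux a b hab α hα f t
    refine ⟨?_, hpt⟩
    apply ContinuousLinearMap.opNorm_le_bound _ hC
    intro f
    rw [ContinuousMap.norm_le _ (mul_nonneg hC (norm_nonneg f))]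
    intro t
    exact hpt f t
  · have hE := Real.exp_pos (-((b - a) / α))
    have hp : (0:ℝ) < 1 / α := by positivity
    calc (1 / α) * (2 - Real.exp (-((b - a) / α))) < (1 / α) * 2 := by nlinarith
      _ = 2 / α := by ring
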